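/- Type 1 explicitness theorem: suppose ⟨P, f⟩ is a Type 1 policy for subject domain V (P a partition of T_V, f assigning an equivalence relation f X on V to each block X ∈ P), S ∈ Sys(V), A an equivalence relation on T, and o ∈ {U, L, EM, CA, WA}. If for every X ∈ P, S∩X has subject domain V and ⟦f X⟧ ≤_o K(S∩X, A), then ⟦⋀_{X∈P} f X⟧ ≤_o K(S, A), where ⋀ denotes the meet (intersection) of equivalence relations. -/

import Mathlib

open Set

section Defs

variable {α : Type*}

/-- A K-space over `W`: a collection of nonempty subsets of `W` covering `W`. -/
def Covers (K : Set (Set α)) (W : Set α) : Prop :=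
  (∀ X ∈ K, X.Nonempty) ∧ ⋃₀ K = W

/-- A partition of `W`: a K-space whose members are pairwise disjoint. -/
def IsPart (K : Set (Set α)) (W : Set α) : Prop :=
  Covers K W ∧ ∀ X ∈ K, ∀ Y ∈ K, X ≠ Y → X ∩ Y = ∅

/-- Upper (Smyth) ordering. -/
def leU (K₁ K₂ : Set (Set α)) : Prop := ∀ X₂ ∈ K₂, ∃ X₁ ∈ K₁, X₁ ⊆ X₂

/-- Lower (Hoare) ordering. -/
def leL (K₁ K₂ : Set (Set α)) : Prop := ∀ X₁ ∈ K₁, ∃ X₂ ∈ K₂, X₁ ⊆ X₂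

/-- Egli-Milner ordering. -/
def leEM (K₁ K₂ : Set (Set α)) : Prop := leU K₁ K₂ ∧ leL K₁ K₂

/-- `P₁` refines `P₂`: every block of `P₁` is contained in some block of `P₂`. -/
def Refines (P₁ P₂ : Set (Set α)) : Prop := ∀ X₁ ∈ P₁, ∃ X₂ ∈ P₂, X₁ ⊆ X₂

/-- `X` answers query `Q` relative to universe `U`. -/
def Answers (U X Q : Set α) : Prop := X ⊆ Q ∨ X ⊆ U \ Q

def CanAnswer (U : Set α) (K : Set (Set α)) (Q : Set α) : Prop := ∃ X ∈ K, Answers U X Q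

def WillAnswer (U : Set α) (K : Set (Set α)) (Q : Set α) : Prop := ∀ X ∈ K, Answers U X Q

/-- Can-answer ordering relative to universe `U`. -/
def leCA (U : Set α) (K₁ K₂ : Set (Set α)) : Prop :=
  ∀ Q ⊆ U, CanAnswer U K₂ Q → CanAnswer U K₁ Q

/-- Will-answer ordering relative to universe `U`. -/
def leWA (U : Set α) (K₁ K₂ : Set (Set α)) : Prop :=
  ∀ Q ⊆ U, WillAnswer U K₂ Q → WillAnswer U K₁ Q

/-- `K` can confirm fact `F`. -/
def CanConfirm (K : Set (Set α)) (F : Set α) : Prop := ∃ X ∈ K, X ⊆ F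

/-- `K` can have uncertainty `F`. -/
def HasUncertainty (K : Set (Set α)) (F : Set α) : Prop := ∃ X ∈ K, F ⊆ X

/-- The observation (equivalence class of attacker `A`) containing trace `t`. -/
def obsClass {T : Type*} (A : Setoid T) (t : T) : Set T := {u | A.r u t}

/-- The K-space of attacker `A` for system `S` with subject function `Φ`:
knowledge sets `Φ(O ∩ S)` for observations `O` with `O ∩ S ≠ ∅`. -/
def kspace {T D : Type*} (Φ : T → D) (S : Set T) (A : Setoid T) : Set (Set D) :=
  {X | ∃ t ∈ S, X = Φ '' (obsClass A t ∩ S)}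

/-- `R` (a set of pairs) is an equivalence relation on the subset `V`. -/
def IsEROn (V : Set α) (R : Set (α × α)) : Prop :=
  R ⊆ V ×ˢ V ∧ (∀ v ∈ V, (v, v) ∈ R) ∧ (∀ x y, (x, y) ∈ R → (y, x) ∈ R) ∧
    (∀ x y z, (x, y) ∈ R → (y, z) ∈ R → (x, z) ∈ R)

/-- The equivalence class of `v` under the relation-as-set-of-pairs `R`. -/
def classOf (R : Set (α × α)) (v : α) : Set α := {u | (u, v) ∈ R}

/-- The partition `⟦R⟧` of `V` corresponding to an equivalence relation `R` on `V`. -/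
def classPart (V : Set α) (R : Set (α × α)) : Set (Set α) :=
  {C | ∃ v ∈ V, C = classOf R v}

end Defs

/-- Type 1 explicitness: if `S` satisfies the Type 1 policy `⟨P, f⟩`
w.r.t. attacker `A` and order `o ∈ {U, L, EM, CA, WA}`, then
`⟦⋀_{X∈P} f X⟧ ≤_o K(S, A)`. -/
theorem stmt17 {T D : Type*} (Φ : T → D) (V : Set D) (A : Setoid T) (S : Set T)
    (hS : S ⊆ Φ ⁻¹' V ∧ Φ '' S = V)
    (P : Set (Set T)) (hP : IsPart P (Φ ⁻¹' V)) (hPne : P.Nonempty)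
    (htotal : ∀ X ∈ P, Φ '' X = V)
    (f : Set T → Set (D × D)) (hf : ∀ X ∈ P, IsEROn V (f X))
    (le : Set D → Set (Set D) → Set (Set D) → Prop)
    (hle : le ∈ ({fun _ => leU, fun _ => leL, fun _ => leEM, leCA, leWA} :
      Set (Set D → Set (Set D) → Set (Set D) → Prop)))
    (hsat : ∀ X ∈ P, (S ∩ X ⊆ Φ ⁻¹' V ∧ Φ '' (S ∩ X) = V) ∧
      le V (classPart V (f X)) (kspace Φ (S ∩ X) A)) :
    le V (classPart V (⋂ X ∈ P, f X)) (kspace Φ S A) := by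
  have hmono : ∀ (X' X Q : Set D), X' ⊆ X → Answers V X Q → Answers V X' Q := by
    intro X' X Q h hA
    rcases hA with h1 | h1
    · exact Or.inl (h.trans h1)
    · exact Or.inr (h.trans h1)
  have hclassSub : ∀ (v : D), ∀ X ∈ P, classOf (⋂ Y ∈ P, f Y) v ⊆ classOf (f X) v := by
    intro v X hX u hu
    simp only [classOf, Set.mem_setOf_eq, Set.mem_iInter] at hu ⊢
    exact hu X hX
  have hup : ∀ X ∈ P, ∀ Y ∈ kspace Φ (S ∩ X) A, ∃ Z ∈ kspace Φ S A, Y ⊆ Z := by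
    intro X hX Y hY
    obtain ⟨t, ht, rfl⟩ := hY
    exact ⟨Φ '' (obsClass A t ∩ S), ⟨t, ht.1, rfl⟩,
      Set.image_mono (Set.inter_subset_inter_right _ Set.inter_subset_left)⟩
  have hdown : ∀ Z ∈ kspace Φ S A, ∃ X ∈ P, ∃ Y ∈ kspace Φ (S ∩ X) A, Y ⊆ Z := by
    intro Z hZ
    obtain ⟨t, ht, rfl⟩ := hZ
    have hmem : t ∈ ⋃₀ P := by rw [hP.1.2]; exact hS.1 ht
    obtain ⟨X, hX, htX⟩ := hmem
    exact ⟨X, hX, Φ '' (obsClass A t ∩ (S ∩ X)), ⟨t, ⟨ht, htX⟩, rfl⟩,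
      Set.image_mono (Set.inter_subset_inter_right _ Set.inter_subset_left)⟩
  simp only [Set.mem_insert_iff, Set.mem_singleton_iff] at hle
  obtain ⟨X₀, hX₀⟩ := hPne
  have caseU : (∀ X ∈ P, leU (classPart V (f X)) (kspace Φ (S ∩ X) A)) →
      leU (classPart V (⋂ X ∈ P, f X)) (kspace Φ S A) := by
    intro h Z hZ
    obtain ⟨X, hX, Y, hY, hYZ⟩ := hdown Z hZ
    obtain ⟨C, hC, hCY⟩ := h X hX Y hY
    obtain ⟨w, hw, rfl⟩ := hC
    exact ⟨classOf (⋂ Y ∈ P, f Y) w, ⟨w, hw, rfl⟩,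
      ((hclassSub w X hX).trans hCY).trans hYZ⟩
  have caseL : (∀ X ∈ P, leL (classPart V (f X)) (kspace Φ (S ∩ X) A)) →
      leL (classPart V (⋂ X ∈ P, f X)) (kspace Φ S A) := by
    intro h C hC
    obtain ⟨v, hv, rfl⟩ := hC
    obtain ⟨Y, hY, hCY⟩ := h X₀ hX₀ (classOf (f X₀) v) ⟨v, hv, rfl⟩
    obtain ⟨Z, hZ, hYZ⟩ := hup X₀ hX₀ Y hY
    exact ⟨Z, hZ, ((hclassSub v X₀ hX₀).trans hCY).trans hYZ⟩
  rcases hle with rfl | rfl | rfl | rfl | rfl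
  · exact caseU fun X hX => (hsat X hX).2
  · exact caseL fun X hX => (hsat X hX).2
  · exact ⟨caseU fun X hX => ((hsat X hX).2).1, caseL fun X hX => ((hsat X hX).2).2⟩
  · intro Q hQ hcan
    obtain ⟨Z, hZ, hZans⟩ := hcan
    obtain ⟨X, hX, Y, hY, hYZ⟩ := hdown Z hZ
    have hcanX : CanAnswer V (kspace Φ (S ∩ X) A) Q := ⟨Y, hY, hmono _ _ _ hYZ hZans⟩
    obtain ⟨C, hC, hCans⟩ := (hsat X hX).2 Q hQ hcanX
    obtain ⟨w, hw, rfl⟩ := hC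
    exact ⟨classOf (⋂ Y ∈ P, f Y) w, ⟨w, hw, rfl⟩, hmono _ _ _ (hclassSub w X hX) hCans⟩
  · intro Q hQ hwill C hC
    obtain ⟨v, hv, rfl⟩ := hC
    have hwillX : WillAnswer V (kspace Φ (S ∩ X₀) A) Q := by
      intro Y hY
      obtain ⟨Z, hZ, hYZ⟩ := hup X₀ hX₀ Y hY
      exact hmono _ _ _ hYZ (hwill Z hZ)
    have hans := (hsat X₀ hX₀).2 Q hQ hwillX (classOf (f X₀) v) ⟨v, hv, rfl⟩
    exact hmono _ _ _ (hclassSub v X₀ hX₀) hans
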